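/- Let G be a finite group of order n and let ℓ ≥ 1 and m ≥ 3 be integers. Then there does not exist an (n, m, ℓ; 1)-strong circular external difference family in G. -/

import Mathlib

open Finset Matrix

/-- `A` is an `(n, m, ℓ; λ)`-strong circular external difference family (SCEDF) in the
finite group `G` of order `n`: the sets `A 0, …, A (m-1)` (indexed cyclically by `ZMod m`)
are pairwise disjoint `ℓ`-element subsets of `G`, and for every `j` and every `g ≠ 1`,
the number of pairs `(y, x) ∈ A (j+1) × A j` with `y * x⁻¹ = g` equals `λ`. -/
def IsSCEDF {G : Type*} [Group G] [Fintype G] [DecidableEq G]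
    (n m ℓ lam : ℕ) (A : ZMod m → Finset G) : Prop :=
  Fintype.card G = n ∧
  (∀ i j : ZMod m, i ≠ j → Disjoint (A i) (A j)) ∧
  (∀ j : ZMod m, (A j).card = ℓ) ∧
  (∀ j : ZMod m, ∀ g : G, g ≠ 1 →
    (((A (j + 1)) ×ˢ (A j)).filter (fun p => p.1 * p.2⁻¹ = g)).card = lam)

/-- Auxiliary counting lemma: the number of `k` with `g k⁻¹ ∈ B` and `h k⁻¹ ∈ C`
equals the number of pairs `(y,x) ∈ B × C` with `y x⁻¹ = g h⁻¹`. -/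
lemma scedf_count_aux {G : Type*} [Group G] [Fintype G] [DecidableEq G]
    (B C : Finset G) (g h : G) :
    (Finset.univ.filter (fun k : G => g * k⁻¹ ∈ B ∧ h * k⁻¹ ∈ C)).card =
    ((B ×ˢ C).filter (fun p => p.1 * p.2⁻¹ = g * h⁻¹)).card := by
  apply Finset.card_bij (fun k _ => ((g * k⁻¹, h * k⁻¹) : G × G))
  · intro k hk
    simp only [Finset.mem_filter, Finset.mem_univ, true_and] at hk
    simp only [Finset.mem_filter, Finset.mem_product]
    refine ⟨⟨hk.1, hk.2⟩, ?_⟩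
    group
  · intro k₁ h₁ k₂ h₂ hEq
    have : g * k₁⁻¹ = g * k₂⁻¹ := congrArg Prod.fst hEq
    have := mul_left_cancel this
    exact inv_injective this
  · rintro ⟨y, x⟩ hb
    simp only [Finset.mem_filter, Finset.mem_product] at hb
    obtain ⟨⟨hy, hx⟩, hyx⟩ := hb
    have hx' : x = h * g⁻¹ * y := by
      have : x = (g * h⁻¹)⁻¹ * y := by rw [← hyx]; group
      rw [this]; group
    have e1 : g * (y⁻¹ * g)⁻¹ = y := by group
    have e2 : h * (y⁻¹ * g)⁻¹ = h * g⁻¹ * y := by group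
    refine ⟨y⁻¹ * g, ?_, ?_⟩
    · simp only [Finset.mem_filter, Finset.mem_univ, true_and, e1, e2]
      exact ⟨hy, by rw [← hx']; exact hx⟩
    · simp [e1, e2, hx', mul_assoc]

theorem no_scedf_lambda_one {G : Type*} [Group G] [Fintype G] [DecidableEq G]
    (n m ℓ : ℕ) (hn : Fintype.card G = n) (hl : 1 ≤ ℓ) (hm : 3 ≤ m) :
    ¬ ∃ A : ZMod m → Finset G, IsSCEDF n m ℓ 1 A := by
  rintro ⟨A, hcard, hdisj, hsize, hdiff⟩
  haveI : NeZero m := ⟨by omega⟩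
  -- basic index facts in ZMod m
  have h10 : (1 : ZMod m) ≠ 0 := by
    intro h
    have : ((1 : ℕ) : ZMod m) = 0 := by exact_mod_cast h
    rw [ZMod.natCast_eq_zero_iff] at this
    have := Nat.le_of_dvd one_pos this
    omega
  have h20 : (2 : ZMod m) ≠ 0 := by
    intro h
    have : ((2 : ℕ) : ZMod m) = 0 := by exact_mod_cast h
    rw [ZMod.natCast_eq_zero_iff] at this
    have := Nat.le_of_dvd (by norm_num) this
    omega
  have hsucc : ∀ j : ZMod m, j + 1 ≠ j := by
    intro j h
    apply h10
    have := congrArg (fun z => z - j) h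
    simpa using this
  -- the incidence matrices
  set M : ZMod m → Matrix G G ℚ :=
    fun j => Matrix.of (fun g h : G => if g * h⁻¹ ∈ A j then (1 : ℚ) else 0) with hM
  set N : Matrix G G ℚ :=
    Matrix.of (fun g h : G => if g = h then (0 : ℚ) else 1) with hNdef
  -- key equation
  have key : ∀ j : ZMod m, M (j + 1) * (M j)ᵀ = N := by
    intro j
    ext g h
    simp only [hM, hNdef, Matrix.mul_apply, Matrix.transpose_apply, Matrix.of_apply]
    have step : ∀ k : G,
        (if g * k⁻¹ ∈ A (j+1) then (1:ℚ) else 0) * (if h * k⁻¹ ∈ A j then (1:ℚ) else 0)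
        = if g * k⁻¹ ∈ A (j+1) ∧ h * k⁻¹ ∈ A j then (1:ℚ) else 0 := by
      intro k
      by_cases h1 : g * k⁻¹ ∈ A (j+1) <;> by_cases h2 : h * k⁻¹ ∈ A j <;>
        simp [h1, h2]
    rw [Finset.sum_congr rfl (fun k _ => step k), Finset.sum_boole]
    rw [scedf_count_aux (A (j+1)) (A j) g h]
    by_cases hgh : g = h
    · subst hgh
      simp only [if_pos rfl]
      have : ((A (j+1)) ×ˢ (A j)).filter (fun p => p.1 * p.2⁻¹ = g * g⁻¹) = ∅ := by
        rw [Finset.filter_eq_empty_iff]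
        rintro ⟨y, x⟩ hp
        simp only [Finset.mem_product] at hp
        intro hq
        simp only [mul_inv_cancel] at hq
        have hxy : y = x := by rwa [mul_inv_eq_one] at hq
        subst hxy
        exact (Finset.disjoint_left.mp (hdisj (j+1) j (hsucc j)) hp.1) hp.2
      rw [this]
      simp
    · have hne : g * h⁻¹ ≠ 1 := by
        intro hc; exact hgh (by rwa [mul_inv_eq_one] at hc)
      rw [hdiff j (g * h⁻¹) hne]
      simp [hgh]
  -- card G ≥ 2
  have hcard2 : 1 < Fintype.card G := by
    have hA0 : (A 0).Nonempty := Finset.card_pos.mp (by rw [hsize 0]; omega)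
    have hA1 : (A 1).Nonempty := Finset.card_pos.mp (by rw [hsize 1]; omega)
    obtain ⟨a, ha⟩ := hA0
    obtain ⟨b, hb⟩ := hA1
    have hab : a ≠ b := by
      intro h; subst h
      exact (Finset.disjoint_left.mp (hdisj 0 1 (fun hc => h10 hc.symm)) ha) hb
    exact Fintype.one_lt_card_iff.mpr ⟨a, b, hab⟩
  have hq : ((Fintype.card G : ℚ) - 1) ≠ 0 := by
    have : (1 : ℚ) < (Fintype.card G : ℚ) := by exact_mod_cast hcard2
    linarith
  -- N is invertible, with explicit inverse K
  set c : ℚ := ((Fintype.card G : ℚ) - 1)⁻¹ with hc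
  set K : Matrix G G ℚ := Matrix.of (fun g h : G => c - if g = h then 1 else 0) with hKdef
  have hNK : N * K = 1 := by
    ext g h
    simp only [hNdef, hKdef, Matrix.mul_apply, Matrix.of_apply, Matrix.one_apply]
    have step : ∀ k : G, (if g = k then (0:ℚ) else 1) * (c - if k = h then 1 else 0)
        = (c - if k = h then 1 else 0) - (if g = k then (c - if k = h then 1 else 0) else 0) := by
      intro k
      by_cases h1 : g = k <;> simp [h1]
    rw [Finset.sum_congr rfl (fun k _ => step k), Finset.sum_sub_distrib,
      Finset.sum_sub_distrib, Finset.sum_const, Finset.sum_ite_eq, Finset.sum_ite_eq',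
      if_pos (Finset.mem_univ g), if_pos (Finset.mem_univ h), Finset.card_univ]
    rw [nsmul_eq_mul]
    by_cases hgh : g = h
    · subst hgh
      simp only [if_pos rfl]
      rw [hc]
      field_simp
      simp only [if_pos trivial, mul_one]
      ring
    · simp only [if_neg hgh]
      rw [hc]
      field_simp
      ring
  have hNsymm : Nᵀ = N := by
    ext g h
    simp only [hNdef, Matrix.transpose_apply, Matrix.of_apply]
    exact if_congr eq_comm rfl rfl
  have hKsymm : Kᵀ = K := by
    ext g h
    simp only [hKdef, Matrix.transpose_apply, Matrix.of_apply]
    congr 1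
    exact if_congr eq_comm rfl rfl
  have hKN : K * N = 1 := by
    have := congrArg Matrix.transpose hNK
    rwa [Matrix.transpose_mul, hNsymm, hKsymm, Matrix.transpose_one] at this
  have hNunit : IsUnit N := ⟨⟨N, K, hNK, hKN⟩, rfl⟩
  -- (M 1)ᵀ is invertible
  have hu1 : IsUnit ((M 1)ᵀ) := by
    have h1 : M (1 + 1) * (M 1)ᵀ = N := key 1
    have hu : IsUnit (M (1 + 1) * (M 1)ᵀ) := h1 ▸ hNunit
    rw [Matrix.isUnit_iff_isUnit_det, Matrix.det_mul] at hu
    exact (Matrix.isUnit_iff_isUnit_det _).mpr (isUnit_of_mul_isUnit_right hu)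
  -- M 0 = M 2
  have e0 : M 0 * (M 1)ᵀ = N := by
    have := congrArg Matrix.transpose (key 0)
    rw [Matrix.transpose_mul, Matrix.transpose_transpose, hNsymm] at this
    simpa [zero_add] using this
  have e1 : M 2 * (M 1)ᵀ = N := by
    have := key 1
    rwa [one_add_one_eq_two] at this
  have hM02 : M 0 = M 2 := IsUnit.mul_right_cancel hu1 (e0.trans e1.symm)
  -- contradiction
  obtain ⟨a, ha⟩ : (A 0).Nonempty := Finset.card_pos.mp (by rw [hsize 0]; omega)
  have hna2 : a ∉ A 2 := by
    have h02 : (0 : ZMod m) ≠ 2 := fun hcon => h20 hcon.symm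
    exact Finset.disjoint_left.mp (hdisj 0 2 h02) ha
  have := congrArg (fun X : Matrix G G ℚ => X a 1) hM02
  simp only [hM, Matrix.of_apply, inv_one, mul_one, if_pos ha, if_neg hna2] at this
  exact one_ne_zero this
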